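/- arXiv:1711.02419 — 5 statements merged into one kernel-verified Lean document; each statement's English description precedes it below -/
import Mathlib

section
/- Suppose the graph G (with vertex set V and adjacency i ~ j iff ω_{ij} > 0) is connected and bipartite with bipartition (T, V∖T), meaning every edge of G has exactly one endpoint in T. Then the kernel of the signless Laplacian L_0^+ = D + A is one-dimensional and is spanned by the function χ_T − χ_{V∖T}, i.e., every u with (D + A)u = 0 is a scalar multiple of χ_T − χ_{V∖T}. -/
open Matrix

/-- If the graph is connected and bipartite with bipartition `(T, Tᶜ)`, the kernel of the
signless Laplacian `L₀⁺ = D + A` is one-dimensional and spanned by `χ_T - χ_{Tᶜ}`. -/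
theorem signlessLaplacian_ker_of_bipartite
    (n : ℕ) (ω : Fin n → Fin n → ℝ)
    (hsymm : ∀ i j, ω i j = ω j i) (hnonneg : ∀ i j, 0 ≤ ω i j)
    (hdiag : ∀ i, ω i i = 0)
    (d : Fin n → ℝ) (hd : ∀ i, d i = ∑ j, ω i j) (hdpos : ∀ i, 0 < d i)
    (A : Matrix (Fin n) (Fin n) ℝ) (hA : ∀ i j, A i j = ω i j)
    (L₀p : Matrix (Fin n) (Fin n) ℝ) (hL₀p : L₀p = Matrix.diagonal d + A)
    (G : SimpleGraph (Fin n)) (hG : ∀ i j, G.Adj i j ↔ i ≠ j ∧ 0 < ω i j)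
    (hconn : G.Connected)
    (T : Set (Fin n))
    (hT : ∀ i j, G.Adj i j → ((i ∈ T ∧ j ∉ T) ∨ (j ∈ T ∧ i ∉ T)))
    (f : Fin n → ℝ)
    (hf : f = Set.indicator T (fun _ => (1 : ℝ))
        - Set.indicator Tᶜ (fun _ => (1 : ℝ))) :
    Module.finrank ℝ (LinearMap.ker (Matrix.toLin' L₀p)) = 1 ∧
      ∀ u : Fin n → ℝ, L₀p *ᵥ u = 0 → ∃ c : ℝ, u = c • f := by
  have hfT : ∀ i, i ∈ T → f i = 1 := by
    intro i hi; simp [hf, Set.indicator, hi]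
  have hfT' : ∀ i, i ∉ T → f i = -1 := by
    intro i hi; simp [hf, Set.indicator, hi]
  have hfsq : ∀ i, f i * f i = 1 := by
    intro i; by_cases hi : i ∈ T
    · rw [hfT i hi]; ring
    · rw [hfT' i hi]; ring
  have hadjf : ∀ i j, G.Adj i j → f j = -f i := by
    intro i j hij
    rcases hT i j hij with ⟨hi, hj⟩ | ⟨hj, hi⟩
    · rw [hfT i hi, hfT' j hj]
    · rw [hfT' i hi, hfT j hj]; ring
  have hmv : ∀ (u : Fin n → ℝ) (i : Fin n),
      (L₀p *ᵥ u) i = d i * u i + ∑ j, ω i j * u j := by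
    intro u i
    simp [hL₀p, Matrix.add_mulVec, Matrix.mulVec, dotProduct, hA,
      Matrix.diagonal, ite_mul, add_mul, Finset.sum_add_distrib, Finset.sum_ite_eq]
  have hfker : L₀p *ᵥ f = 0 := by
    funext i
    rw [hmv]
    have hsum : ∑ j, ω i j * f j = -(d i * f i) := by
      have : ∀ j ∈ Finset.univ, ω i j * f j = -(ω i j * f i) := by
        intro j _
        rcases eq_or_lt_of_le (hnonneg i j) with h0 | hpos
        · simp [← h0]
        · have hij : i ≠ j := by
            rintro rfl; rw [hdiag i] at hpos; exact lt_irrefl 0 hpos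
          rw [hadjf i j ((hG i j).mpr ⟨hij, hpos⟩)]; ring
      rw [Finset.sum_congr rfl this, Finset.sum_neg_distrib, ← Finset.sum_mul,
        ← hd i]
    simp [hsum]
  -- main kernel characterization
  have key : ∀ u : Fin n → ℝ, L₀p *ᵥ u = 0 → ∃ c : ℝ, u = c • f := by
    intro u hu
    have hu' : ∀ i, ∑ j, ω i j * u j = -(d i * u i) := by
      intro i
      have := congrFun hu i
      rw [hmv] at this
      simp at this
      linarith
    have hquad : ∑ i, ∑ j, ω i j * (u i + u j) ^ 2 = 0 := by
      have hexp : ∀ i j, ω i j * (u i + u j) ^ 2 =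
          ω i j * (u i * u i) + 2 * (ω i j * u j) * u i + ω i j * (u j * u j) := by
        intro i j; ring
      have h1 : ∑ i, ∑ j, ω i j * (u i * u i) = ∑ i, d i * (u i * u i) := by
        refine Finset.sum_congr rfl fun i _ => ?_
        rw [← Finset.sum_mul, ← hd i]
      have h2 : ∑ i, ∑ j, 2 * (ω i j * u j) * u i = -(2 * ∑ i, d i * (u i * u i)) := by
        have : ∀ i, ∑ j, 2 * (ω i j * u j) * u i = -(2 * (d i * (u i * u i))) := by
          intro i
          have e : ∀ j ∈ Finset.univ, 2 * (ω i j * u j) * u i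
              = (ω i j * u j) * (2 * u i) := fun j _ => by ring
          rw [Finset.sum_congr rfl e, ← Finset.sum_mul, hu' i]; ring
        rw [Finset.sum_congr rfl fun i _ => this i, Finset.sum_neg_distrib,
          ← Finset.mul_sum]
      have h3 : ∑ i, ∑ j, ω i j * (u j * u j) = ∑ i, d i * (u i * u i) := by
        rw [Finset.sum_comm]
        refine Finset.sum_congr rfl fun j _ => ?_
        have : ∀ i, ω i j * (u j * u j) = ω j i * (u j * u j) := by
          intro i; rw [hsymm i j]
        rw [Finset.sum_congr rfl fun i _ => this i, ← Finset.sum_mul, ← hd j]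
      calc ∑ i, ∑ j, ω i j * (u i + u j) ^ 2
          = ∑ i, ∑ j, (ω i j * (u i * u i) + 2 * (ω i j * u j) * u i
              + ω i j * (u j * u j)) := by
            refine Finset.sum_congr rfl fun i _ => Finset.sum_congr rfl fun j _ => ?_
            exact hexp i j
        _ = (∑ i, ∑ j, ω i j * (u i * u i)) + (∑ i, ∑ j, 2 * (ω i j * u j) * u i)
              + (∑ i, ∑ j, ω i j * (u j * u j)) := by
            simp [Finset.sum_add_distrib]
        _ = 0 := by rw [h1, h2, h3]; ring
    have hterm : ∀ i j, ω i j * (u i + u j) ^ 2 = 0 := by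
      have hnn : ∀ i ∈ Finset.univ, (0:ℝ) ≤ ∑ j, ω i j * (u i + u j) ^ 2 := by
        intro i _
        exact Finset.sum_nonneg fun j _ => mul_nonneg (hnonneg i j) (sq_nonneg _)
      have h1 := (Finset.sum_eq_zero_iff_of_nonneg hnn).mp hquad
      intro i j
      have h2 := h1 i (Finset.mem_univ i)
      have hnn2 : ∀ j ∈ Finset.univ, (0:ℝ) ≤ ω i j * (u i + u j) ^ 2 :=
        fun j _ => mul_nonneg (hnonneg i j) (sq_nonneg _)
      exact (Finset.sum_eq_zero_iff_of_nonneg hnn2).mp h2 j (Finset.mem_univ j)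
    have hstep : ∀ i j, G.Adj i j → u j * f j = u i * f i := by
      intro i j hij
      obtain ⟨hij', hpos⟩ := (hG i j).mp hij
      have h0 := hterm i j
      have huij : u j = -u i := by
        have : (u i + u j) ^ 2 = 0 := by
          by_contra h
          exact h ((mul_eq_zero.mp h0).resolve_left (ne_of_gt hpos))
        have := pow_eq_zero_iff (n := 2) (by norm_num) |>.mp this
        linarith
      rw [huij, hadjf i j hij]; ring
    have hwalk : ∀ {i j : Fin n}, G.Walk i j → u i * f i = u j * f j := by
      intro i j p
      induction p with
      | nil => rfl
      | cons h _ ih => rw [← ih, hstep _ _ h]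
    have : Nonempty (Fin n) := hconn.nonempty
    obtain ⟨i₀⟩ := this
    refine ⟨u i₀ * f i₀, funext fun i => ?_⟩
    have hw := hwalk (hconn.preconnected i₀ i).some
    have := hfsq i
    simp only [Pi.smul_apply, smul_eq_mul]
    rw [hw, mul_assoc, this, mul_one]
  refine ⟨?_, key⟩
  have : Nonempty (Fin n) := hconn.nonempty
  obtain ⟨i₀⟩ := this
  have hfne : f ≠ 0 := by
    intro h
    have := hfsq i₀
    rw [h] at this
    simp at this
  have hker_eq : LinearMap.ker (Matrix.toLin' L₀p) = Submodule.span ℝ {f} := by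
    apply le_antisymm
    · intro u hu
      rw [LinearMap.mem_ker, Matrix.toLin'_apply] at hu
      obtain ⟨c, hc⟩ := key u hu
      rw [hc]
      exact Submodule.smul_mem _ _ (Submodule.mem_span_singleton_self f)
    · rw [Submodule.span_le, Set.singleton_subset_iff]
      simp [SetLike.mem_coe, LinearMap.mem_ker, Matrix.toLin'_apply, hfker]
  rw [hker_eq, finrank_span_singleton hfne]
end

section
/- (Γ-convergence lower bound) Let {ε_k} be a sequence of positive reals with ε_k → 0, let u_0 : V → ℝ, and let {u_k} be any sequence of functions V → ℝ converging to u_0 (i.e., u_k(i) → u_0(i) for every i ∈ V). Then: if u_0 takes only the values ±1, then Σ_{i,j∈V} ω_{ij}|u_0(i) + u_0(j)| ≤ liminf_{k→∞} f_{ε_k}^+(u_k); and if u_0(i) ∉ {−1,1} for some i ∈ V, then f_{ε_k}^+(u_k) → +∞ as k → ∞. -/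
open Filter

/-- Γ-convergence lower bound for the signless Ginzburg–Landau functionals: along any
sequence `ε_k ↓ 0` and `u_k → u₀` pointwise, if `u₀` is binary then
`∑_{i,j} ω_{ij}|u₀_i + u₀_j| ≤ liminf f_{ε_k}⁺(u_k)`, and if `u₀` is not binary then
`f_{ε_k}⁺(u_k) → +∞`. -/
theorem signlessGL_gamma_liminf
    (n : ℕ) (ω : Fin n → Fin n → ℝ)
    (hsymm : ∀ i j, ω i j = ω j i) (hnonneg : ∀ i j, 0 ≤ ω i j)
    (hdiag : ∀ i, ω i i = 0)
    (f : ℝ → (Fin n → ℝ) → ℝ)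
    (hf : ∀ ε u, f ε u = (1 / 2) * ∑ i, ∑ j, ω i j * (u i + u j) ^ 2
        + (1 / ε) * ∑ i, ((u i) ^ 2 - 1) ^ 2)
    (ε : ℕ → ℝ) (hεpos : ∀ k, 0 < ε k)
    (hεlim : Tendsto ε atTop (nhds 0))
    (u₀ : Fin n → ℝ) (u : ℕ → Fin n → ℝ)
    (hconv : ∀ i, Tendsto (fun k => u k i) atTop (nhds (u₀ i))) :
    ((∀ i, u₀ i = -1 ∨ u₀ i = 1) →
      ((∑ i, ∑ j, ω i j * |u₀ i + u₀ j| : ℝ) : EReal)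
        ≤ Filter.liminf (fun k => ((f (ε k) (u k) : ℝ) : EReal)) atTop) ∧
    ((∃ i, u₀ i ≠ -1 ∧ u₀ i ≠ 1) →
      Tendsto (fun k => f (ε k) (u k)) atTop atTop) := by
  set g : ℕ → ℝ := fun k => (1 / 2) * ∑ i, ∑ j, ω i j * (u k i + u k j) ^ 2 with hg
  set s : ℕ → ℝ := fun k => ∑ i, ((u k i) ^ 2 - 1) ^ 2 with hs
  set G : ℝ := (1 / 2) * ∑ i, ∑ j, ω i j * (u₀ i + u₀ j) ^ 2 with hG
  set S : ℝ := ∑ i, ((u₀ i) ^ 2 - 1) ^ 2 with hS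
  have hgG : Tendsto g atTop (nhds G) := by
    apply Tendsto.const_mul
    apply tendsto_finset_sum
    intro i _
    apply tendsto_finset_sum
    intro j _
    exact Tendsto.const_mul _ (((hconv i).add (hconv j)).pow 2)
  have hsS : Tendsto s atTop (nhds S) := by
    apply tendsto_finset_sum
    intro i _
    exact (((hconv i).pow 2).sub tendsto_const_nhds).pow 2
  have hsnn : ∀ k, 0 ≤ s k := fun k => Finset.sum_nonneg fun i _ => sq_nonneg _
  have hfge : ∀ k, g k ≤ f (ε k) (u k) := by
    intro k
    rw [hf]
    have h1 : 0 ≤ (1 / ε k) * s k :=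
      mul_nonneg (le_of_lt (one_div_pos.2 (hεpos k))) (hsnn k)
    exact le_add_of_nonneg_right h1
  constructor
  · intro hbin
    have hEq : (∑ i, ∑ j, ω i j * |u₀ i + u₀ j| : ℝ) = G := by
      rw [hG, Finset.mul_sum]
      apply Finset.sum_congr rfl
      intro i _
      rw [Finset.mul_sum]
      apply Finset.sum_congr rfl
      intro j _
      rcases hbin i with hi | hi <;> rcases hbin j with hj | hj <;>
        rw [hi, hj] <;> norm_num <;> ring
    rw [hEq]
    have hglim : Filter.liminf (fun k => ((g k : ℝ) : EReal)) atTop = (G : EReal) := by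
      apply Tendsto.liminf_eq
      exact (EReal.tendsto_coe).2 hgG
    rw [← hglim]
    exact Filter.liminf_le_liminf
      (Filter.Eventually.of_forall fun k => by exact_mod_cast hfge k)
  · intro ⟨i, hi1, hi2⟩
    have hSpos : 0 < S := by
      apply Finset.sum_pos' (fun j _ => sq_nonneg _) ⟨i, Finset.mem_univ i, ?_⟩
      have hne : (u₀ i) ^ 2 - 1 ≠ 0 := by
        intro h
        rcases mul_eq_zero.1 (show (u₀ i - 1) * (u₀ i + 1) = 0 by nlinarith) with h' | h'
        · exact hi2 (by linarith)
        · exact hi1 (by linarith)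
      positivity
    have hwev : ∀ᶠ k in atTop, S / 2 ≤ s k :=
      (hsS.eventually (eventually_gt_nhds (show S / 2 < S by linarith))).mono
        fun k hk => hk.le
    have hinv : Tendsto (fun k => 1 / ε k) atTop atTop := by
      have h0 : Tendsto ε atTop (nhdsWithin 0 (Set.Ioi 0)) :=
        tendsto_nhdsWithin_of_tendsto_nhds_of_eventually_within _ hεlim
          (Filter.Eventually.of_forall fun k => hεpos k)
      simpa [one_div, Function.comp_def] using tendsto_inv_nhdsGT_zero.comp h0
    have hw : Tendsto (fun k => (1 / ε k) * s k) atTop atTop := by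
      apply tendsto_atTop_mono' atTop (hwev.mono fun k hk => ?_)
        (hinv.atTop_mul_const (show (0:ℝ) < S / 2 by linarith))
      exact mul_le_mul_of_nonneg_left hk (le_of_lt (one_div_pos.2 (hεpos k)))
    have hsum : Tendsto (fun k => g k + (1 / ε k) * s k) atTop atTop :=
      hgG.add_atTop hw
    exact hsum.congr fun k => (hf _ _).symm
end

section
/- (Equi-coercivity) Let {ε_k} be a sequence of positive reals with ε_k → 0, and let {u_k} be a sequence of functions V → ℝ for which there exists C > 0 such that f_{ε_k}^+(u_k) < C for all k. Then there exists a subsequence {u_{k'}} and a binary function u_0 : V → {−1,1} such that u_{k'} converges to u_0 (pointwise on V). -/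
open Filter

/-- Equi-coercivity: if `ε_k ↓ 0` and `f_{ε_k}⁺(u_k) < C` uniformly in `k`, then some
subsequence of `u_k` converges pointwise to a binary function `u₀ : V → {-1,1}`. -/
theorem signlessGL_equicoercive
    (n : ℕ) (ω : Fin n → Fin n → ℝ)
    (hsymm : ∀ i j, ω i j = ω j i) (hnonneg : ∀ i j, 0 ≤ ω i j)
    (hdiag : ∀ i, ω i i = 0)
    (f : ℝ → (Fin n → ℝ) → ℝ)
    (hf : ∀ ε u, f ε u = (1 / 2) * ∑ i, ∑ j, ω i j * (u i + u j) ^ 2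
        + (1 / ε) * ∑ i, ((u i) ^ 2 - 1) ^ 2)
    (ε : ℕ → ℝ) (hεpos : ∀ k, 0 < ε k)
    (hεlim : Tendsto ε atTop (nhds 0))
    (u : ℕ → Fin n → ℝ)
    (C : ℝ) (hC : 0 < C) (hbound : ∀ k, f (ε k) (u k) < C) :
    ∃ φ : ℕ → ℕ, StrictMono φ ∧ ∃ u₀ : Fin n → ℝ,
      (∀ i, u₀ i = -1 ∨ u₀ i = 1) ∧
      ∀ i, Tendsto (fun k => u (φ k) i) atTop (nhds (u₀ i)) := by
  -- The double-well part is uniformly small: S k < C * ε k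
  have hS : ∀ k, (∑ i, ((u k i) ^ 2 - 1) ^ 2) < C * ε k := by
    intro k
    have hQ : 0 ≤ ∑ i, ∑ j, ω i j * (u k i + u k j) ^ 2 :=
      Finset.sum_nonneg fun i _ => Finset.sum_nonneg fun j _ =>
        mul_nonneg (hnonneg i j) (sq_nonneg _)
    have hfk := hbound k
    rw [hf] at hfk
    have h1 : (1 / ε k) * ∑ i, ((u k i) ^ 2 - 1) ^ 2 < C := by nlinarith
    have := (div_lt_iff₀ (hεpos k)).mp (by simpa [div_eq_mul_inv, one_div, inv_mul_eq_div] using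
      (lt_of_le_of_lt (le_of_eq (by ring)) h1 : (∑ i, ((u k i) ^ 2 - 1) ^ 2) / ε k < C))
    linarith [this]
  have hSnonneg : ∀ k, 0 ≤ ∑ i, ((u k i) ^ 2 - 1) ^ 2 :=
    fun k => Finset.sum_nonneg fun i _ => sq_nonneg _
  have hterm : ∀ k i, ((u k i) ^ 2 - 1) ^ 2 < C * ε k := fun k i =>
    lt_of_le_of_lt (Finset.single_le_sum (f := fun j => ((u k j) ^ 2 - 1) ^ 2)
      (fun j _ => sq_nonneg _) (Finset.mem_univ i)) (hS k)
  -- ε is bounded above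
  obtain ⟨M, hM⟩ : ∃ M, ∀ k, ε k ≤ M := by
    obtain ⟨M, hM⟩ := hεlim.bddAbove_range
    exact ⟨M, fun k => hM ⟨k, rfl⟩⟩
  set R : ℝ := Real.sqrt (1 + Real.sqrt (C * M)) with hR
  have hCM : 0 ≤ C * M := le_of_lt (mul_pos hC ((hεpos 0).trans_le (hM 0)))
  -- membership in a closed ball
  have hmem : ∀ k, u k ∈ Metric.closedBall (0 : Fin n → ℝ) R := by
    intro k
    rw [Metric.mem_closedBall, dist_zero_right, pi_norm_le_iff_of_nonneg (Real.sqrt_nonneg _)]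
    intro i
    have h1 : ((u k i) ^ 2 - 1) ^ 2 ≤ C * M := by
      have := hterm k i
      have h2 : C * ε k ≤ C * M := mul_le_mul_of_nonneg_left (hM k) hC.le
      linarith
    have h3 : (u k i) ^ 2 - 1 ≤ Real.sqrt (C * M) := by
      have := Real.sqrt_le_sqrt h1
      rw [Real.sqrt_sq_eq_abs] at this
      exact (le_abs_self _).trans this
    have h4 : (u k i) ^ 2 ≤ R ^ 2 := by
      rw [hR, Real.sq_sqrt (by positivity)]
      linarith
    have := Real.sqrt_le_sqrt h4
    rwa [Real.sqrt_sq_eq_abs, Real.sqrt_sq (Real.sqrt_nonneg _)] at this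
  -- extract a convergent subsequence by compactness
  obtain ⟨u₀, -, φ, hφ, hconv⟩ :=
    (isCompact_closedBall (0 : Fin n → ℝ) R).tendsto_subseq hmem
  have hpt : ∀ i, Tendsto (fun k => u (φ k) i) atTop (nhds (u₀ i)) := by
    intro i
    exact (tendsto_pi_nhds.mp hconv) i
  refine ⟨φ, hφ, u₀, ?_, hpt⟩
  intro i
  -- the limit satisfies (u₀ i)^2 = 1
  have hεφ : Tendsto (fun k => C * ε (φ k)) atTop (nhds 0) := by
    have := hεlim.comp hφ.tendsto_atTop
    simpa using (this.const_mul C)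
  have h1 : Tendsto (fun k => ((u (φ k) i) ^ 2 - 1) ^ 2) atTop
      (nhds (((u₀ i) ^ 2 - 1) ^ 2)) := (((hpt i).pow 2).sub_const 1).pow 2
  have h2 : Tendsto (fun k => ((u (φ k) i) ^ 2 - 1) ^ 2) atTop (nhds 0) :=
    squeeze_zero (fun k => sq_nonneg _) (fun k => (hterm (φ k) i).le) hεφ
  have h3 : ((u₀ i) ^ 2 - 1) ^ 2 = 0 := tendsto_nhds_unique h1 h2
  have h4 : (u₀ i) ^ 2 = 1 := by
    have := pow_eq_zero_iff (n := 2) (by norm_num) |>.mp h3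
    linarith
  have h5 : (u₀ i - 1) * (u₀ i + 1) = 0 := by nlinarith
  rcases mul_eq_zero.mp h5 with h | h
  · right; linarith
  · left; linarith
end

section
/- (Convergence of minimizers to maximum cuts) Let {ε_k} be a sequence of positive reals with ε_k → 0, and for each k let u_k be a global minimizer of f_{ε_k}^+ over all functions V → ℝ. Then there exists a binary function u_0 : V → {−1,1} and a subsequence {u_{k'}} converging to u_0 (pointwise on V); moreover, the cut C_{u_0} induced by u_0 is a maximum cut, i.e., for every binary function v : V → {−1,1}, s(C_v) ≤ s(C_{u_0}). -/
open Filter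

/-- Convergence of minimizers to maximum cuts: if `ε_k ↓ 0` and each `u_k` is a global
minimizer of `f_{ε_k}⁺`, then a subsequence of `u_k` converges pointwise to a binary
function `u₀` which induces a maximum cut. -/
theorem signlessGL_minimizers_converge_to_maxcut
    (n : ℕ) (ω : Fin n → Fin n → ℝ)
    (hsymm : ∀ i j, ω i j = ω j i) (hnonneg : ∀ i j, 0 ≤ ω i j)
    (hdiag : ∀ i, ω i i = 0)
    (hdpos : ∀ i, 0 < ∑ j, ω i j)
    (f : ℝ → (Fin n → ℝ) → ℝ)
    (hf : ∀ ε u, f ε u = (1 / 2) * ∑ i, ∑ j, ω i j * (u i + u j) ^ 2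
        + (1 / ε) * ∑ i, ((u i) ^ 2 - 1) ^ 2)
    (s : (Fin n → ℝ) → ℝ)
    (hs : ∀ u : Fin n → ℝ,
      s u = ∑ i, ∑ j, if u i = -1 ∧ u j = 1 then ω i j else 0)
    (ε : ℕ → ℝ) (hεpos : ∀ k, 0 < ε k)
    (hεlim : Tendsto ε atTop (nhds 0))
    (u : ℕ → Fin n → ℝ)
    (hmin : ∀ k, ∀ v : Fin n → ℝ, f (ε k) (u k) ≤ f (ε k) v) :
    ∃ u₀ : Fin n → ℝ, (∀ i, u₀ i = -1 ∨ u₀ i = 1) ∧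
      (∃ φ : ℕ → ℕ, StrictMono φ ∧
        ∀ i, Tendsto (fun k => u (φ k) i) atTop (nhds (u₀ i))) ∧
      ∀ v : Fin n → ℝ, (∀ i, v i = -1 ∨ v i = 1) → s v ≤ s u₀ := by
  classical
  set T : ℝ := ∑ i, ∑ j, ω i j with hT
  set Q : (Fin n → ℝ) → ℝ := fun w => (1/2) * ∑ i, ∑ j, ω i j * (w i + w j) ^ 2 with hQ
  have hQnonneg : ∀ w, 0 ≤ Q w := by
    intro w
    apply mul_nonneg (by norm_num)
    apply Finset.sum_nonneg; intro i _
    apply Finset.sum_nonneg; intro j _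
    exact mul_nonneg (hnonneg i j) (sq_nonneg _)
  have hTnonneg : 0 ≤ T := by
    apply Finset.sum_nonneg; intro i _
    exact Finset.sum_nonneg fun j _ => hnonneg i j
  have hpennn : ∀ k (w : Fin n → ℝ), 0 ≤ (1 / ε k) * ∑ i, ((w i) ^ 2 - 1) ^ 2 := by
    intro k w
    apply mul_nonneg (one_div_pos.mpr (hεpos k)).le
    exact Finset.sum_nonneg fun i _ => sq_nonneg _
  have hfbin : ∀ k (v : Fin n → ℝ), (∀ i, v i = -1 ∨ v i = 1) → f (ε k) v = Q v := by
    intro k v hv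
    rw [hf]
    have : ∑ i, ((v i) ^ 2 - 1) ^ 2 = 0 := by
      apply Finset.sum_eq_zero; intro i _
      rcases hv i with h | h <;> rw [h] <;> norm_num
    rw [this, mul_zero, add_zero]
  -- the cut identity for binary functions
  have hcut : ∀ v : Fin n → ℝ, (∀ i, v i = -1 ∨ v i = 1) → Q v = 2 * T - 4 * s v := by
    intro v hv
    have hterm : ∀ i j, ω i j * (v i + v j) ^ 2
        = 4 * ω i j - 4 * (if v i = -1 ∧ v j = 1 then ω i j else 0)
          - 4 * (if v i = 1 ∧ v j = -1 then ω i j else 0) := by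
      intro i j
      rcases hv i with h | h <;> rcases hv j with h' | h' <;>
        rw [h, h'] <;> norm_num <;> ring
    have hswap : (∑ i, ∑ j, if v i = 1 ∧ v j = -1 then ω i j else 0)
        = ∑ i, ∑ j, if v i = -1 ∧ v j = 1 then ω i j else 0 := by
      rw [Finset.sum_comm]
      refine Finset.sum_congr rfl fun i _ => Finset.sum_congr rfl fun j _ => ?_
      rcases hv i with h | h <;> rcases hv j with h' | h' <;> simp [h, h', hsymm j i] <;> norm_num
    rw [hQ, hs]
    simp only [hterm]
    rw [show (∑ i, ∑ j, (4 * ω i j - 4 * (if v i = -1 ∧ v j = 1 then ω i j else 0)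
          - 4 * (if v i = 1 ∧ v j = -1 then ω i j else 0)))
        = 4 * (∑ i, ∑ j, ω i j)
          - 4 * (∑ i, ∑ j, if v i = -1 ∧ v j = 1 then ω i j else 0)
          - 4 * (∑ i, ∑ j, if v i = 1 ∧ v j = -1 then ω i j else 0) by
      simp [Finset.sum_sub_distrib, Finset.mul_sum]]
    rw [hswap]
    ring
  -- basic upper bound from the constant function 1
  have hQone : Q (fun _ => (1 : ℝ)) = 2 * T := by
    rw [hQ]
    simp only
    rw [hT]
    rw [show (∑ i, ∑ j, ω i j * ((1 : ℝ) + 1) ^ 2) = 4 * ∑ i, ∑ j, ω i j by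
      rw [Finset.mul_sum]
      refine Finset.sum_congr rfl fun i _ => ?_
      rw [Finset.mul_sum]
      refine Finset.sum_congr rfl fun j _ => ?_
      ring]
    ring
  have hub : ∀ k, f (ε k) (u k) ≤ 2 * T := by
    intro k
    calc f (ε k) (u k) ≤ f (ε k) (fun _ => 1) := hmin k _
      _ = Q (fun _ => 1) := hfbin k _ (fun _ => Or.inr rfl)
      _ = 2 * T := hQone
  have hWle : ∀ k i, ((u k i) ^ 2 - 1) ^ 2 ≤ 2 * T * ε k := by
    intro k i
    have h1 : (1 / ε k) * ∑ i, ((u k i) ^ 2 - 1) ^ 2 ≤ 2 * T := by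
      have htop := hub k
      rw [hf] at htop
      have hq := hQnonneg (u k)
      simp only [hQ] at hq
      linarith
    have h2 : ∑ i, ((u k i) ^ 2 - 1) ^ 2 ≤ 2 * T * ε k := by
      have hε := hεpos k
      rw [div_mul_eq_mul_div, one_mul, div_le_iff₀ hε] at h1
      linarith
    have h3 : ((u k i) ^ 2 - 1) ^ 2 ≤ ∑ i, ((u k i) ^ 2 - 1) ^ 2 :=
      Finset.single_le_sum (f := fun j => ((u k j) ^ 2 - 1) ^ 2)
        (fun j _ => sq_nonneg _) (Finset.mem_univ i)
    linarith
  -- uniform bound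
  obtain ⟨E, hE⟩ : ∃ E, ∀ k, ε k ≤ E := by
    have hb : BddAbove (Set.range ε) := hεlim.bddAbove_range
    obtain ⟨E, hE⟩ := hb
    exact ⟨E, fun k => hE ⟨k, rfl⟩⟩
  set B : ℝ := 2 * T * E with hB
  have hEnn : 0 ≤ E := le_trans (hεpos 0).le (hE 0)
  have hBnn : 0 ≤ B := by
    rw [hB]; exact mul_nonneg (by linarith) hEnn
  set M : ℝ := Real.sqrt (1 + Real.sqrt B) with hM
  have hMnn : 0 ≤ M := Real.sqrt_nonneg _
  have habs : ∀ k i, |u k i| ≤ M := by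
    intro k i
    have h1 : ((u k i) ^ 2 - 1) ^ 2 ≤ B := by
      have := hWle k i
      have h2 : 2 * T * ε k ≤ 2 * T * E := by
        apply mul_le_mul_of_nonneg_left (hE k) (by linarith)
      linarith
    have hsB : Real.sqrt B ^ 2 = B := Real.sq_sqrt hBnn
    have hsBnn : 0 ≤ Real.sqrt B := Real.sqrt_nonneg _
    have h2 : (u k i) ^ 2 ≤ 1 + Real.sqrt B := by
      nlinarith [sq_nonneg ((u k i) ^ 2 - 1 + Real.sqrt B), sq_nonneg (u k i)]
    calc |u k i| = Real.sqrt ((u k i) ^ 2) := (Real.sqrt_sq_eq_abs _).symm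
      _ ≤ M := Real.sqrt_le_sqrt h2
  have hmem : ∀ k, u k ∈ Metric.closedBall (0 : Fin n → ℝ) M := by
    intro k
    rw [Metric.mem_closedBall, dist_zero_right]
    exact pi_norm_le_iff_of_nonneg hMnn |>.mpr fun i => by
      rw [Real.norm_eq_abs]; exact habs k i
  obtain ⟨u₀, _, φ, hφ, hconv⟩ :=
    (isCompact_closedBall (0 : Fin n → ℝ) M).tendsto_subseq hmem
  have hpt : ∀ i, Tendsto (fun k => u (φ k) i) atTop (nhds (u₀ i)) := fun i =>
    ((continuous_apply i).tendsto u₀).comp hconv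
  have hεφ : Tendsto (fun k => ε (φ k)) atTop (nhds 0) :=
    hεlim.comp hφ.tendsto_atTop
  -- u₀ is binary
  have hbin : ∀ i, u₀ i = -1 ∨ u₀ i = 1 := by
    intro i
    have hL : Tendsto (fun k => ((u (φ k) i) ^ 2 - 1) ^ 2) atTop
        (nhds (((u₀ i) ^ 2 - 1) ^ 2)) :=
      (((hpt i).pow 2).sub tendsto_const_nhds).pow 2
    have hR : Tendsto (fun k => 2 * T * ε (φ k)) atTop (nhds 0) := by
      have := hεφ.const_mul (2 * T)
      simpa using this
    have hle : ((u₀ i) ^ 2 - 1) ^ 2 ≤ 0 :=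
      le_of_tendsto_of_tendsto' hL hR fun k => hWle (φ k) i
    have h0 : ((u₀ i) ^ 2 - 1) ^ 2 = 0 := le_antisymm hle (sq_nonneg _)
    have h1 : (u₀ i) ^ 2 = 1 := by nlinarith [sq_nonneg ((u₀ i) ^ 2 - 1)]
    have h2 : u₀ i * u₀ i = 1 := by nlinarith
    rcases mul_self_eq_one_iff.mp h2 with h | h
    · exact Or.inr h
    · exact Or.inl h
  refine ⟨u₀, hbin, ⟨φ, hφ, hpt⟩, ?_⟩
  intro v hv
  have hQcont : Continuous Q := by
    apply continuous_const.mul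
    apply continuous_finset_sum; intro i _
    apply continuous_finset_sum; intro j _
    exact continuous_const.mul (((continuous_apply i).add (continuous_apply j)).pow 2)
  have hQk : ∀ k, Q (u (φ k)) ≤ Q v := by
    intro k
    have h1 : f (ε (φ k)) (u (φ k)) ≤ Q v := by
      calc f (ε (φ k)) (u (φ k)) ≤ f (ε (φ k)) v := hmin (φ k) v
        _ = Q v := hfbin (φ k) v hv
    have h2 : Q (u (φ k)) ≤ f (ε (φ k)) (u (φ k)) := by
      rw [hf]
      have := hpennn (φ k) (u (φ k))
      rw [hQ]
      linarith
    linarith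
  have hQlim : Tendsto (fun k => Q (u (φ k))) atTop (nhds (Q u₀)) :=
    (hQcont.tendsto u₀).comp hconv
  have hQle : Q u₀ ≤ Q v :=
    le_of_tendsto_of_tendsto' hQlim tendsto_const_nhds hQk
  have e1 := hcut u₀ hbin
  have e2 := hcut v hv
  linarith
end

section
/- (MBO pinning) Let L_0^+ = D + A be the signless Laplacian and let λ_n be its largest eigenvalue. Let μ⁰ : V → {−1,1} be any binary function. If the diffusion time τ > 0 satisfies τ < λ_n^{-1} · log(1 + n^{-1/2}), then one iteration of the signless MBO scheme leaves μ⁰ unchanged: for every i ∈ V, thresholding the vector exp(−τ L_0^+) μ⁰ (assigning 1 where the entry is > 0 and −1 where it is ≤ 0) returns μ⁰_i. -/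
open Matrix

/-- MBO pinning: if the diffusion time `τ` satisfies `τ < λ_n⁻¹ log(1 + n^{-1/2})`, where
`λ_n` is the largest eigenvalue of the signless Laplacian `L₀⁺ = D + A`, then one
iteration of the signless MBO scheme (diffusion by `exp(-τ L₀⁺)` followed by
thresholding) leaves any binary `μ⁰ : V → {-1,1}` unchanged. -/
theorem signlessMBO_pinning
    (n : ℕ) (hn : 1 ≤ n) (ω : Fin n → Fin n → ℝ)
    (hsymm : ∀ i j, ω i j = ω j i) (hnonneg : ∀ i j, 0 ≤ ω i j)
    (hdiag : ∀ i, ω i i = 0)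
    (d : Fin n → ℝ) (hd : ∀ i, d i = ∑ j, ω i j) (hdpos : ∀ i, 0 < d i)
    (A : Matrix (Fin n) (Fin n) ℝ) (hA : ∀ i j, A i j = ω i j)
    (L₀p : Matrix (Fin n) (Fin n) ℝ) (hL₀p : L₀p = Matrix.diagonal d + A)
    (lam : ℝ)
    (hlam_eig : ∃ v : Fin n → ℝ, v ≠ 0 ∧ L₀p *ᵥ v = lam • v)
    (hlam_max : ∀ (μ : ℝ) (v : Fin n → ℝ), v ≠ 0 → L₀p *ᵥ v = μ • v → μ ≤ lam)
    (μ₀ : Fin n → ℝ) (hμ₀ : ∀ i, μ₀ i = -1 ∨ μ₀ i = 1)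
    (τ : ℝ) (hτpos : 0 < τ)
    (hτ : τ < lam⁻¹ * Real.log (1 + ((n : ℝ)) ^ (-(1 : ℝ) / 2))) :
    ∀ i, (if 0 < (NormedSpace.exp (-(τ • L₀p)) *ᵥ μ₀) i then (1 : ℝ) else -1)
      = μ₀ i := by
  -- notation
  set s : ℝ := ((n : ℝ)) ^ (-(1 : ℝ) / 2) with hs
  have hnpos : (0 : ℝ) < (n : ℝ) := by exact_mod_cast hn
  have hspos : 0 < s := Real.rpow_pos_of_pos hnpos _
  have hlogpos : 0 < Real.log (1 + s) := Real.log_pos (by linarith)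
  -- L₀p is symmetric
  have hAh : A.IsHermitian := by
    ext i j
    simp only [Matrix.conjTranspose_apply, RCLike.star_def, starRingEnd_apply, star_trivial]
    rw [hA, hA, hsymm]
  have hH : L₀p.IsHermitian := by
    rw [hL₀p]
    exact (Matrix.isHermitian_diagonal_iff.2 (fun i => isSelfAdjoint_iff.2 rfl)).add hAh
  -- positive semidefiniteness
  have hPSD : L₀p.PosSemidef := by
    refine (Matrix.posSemidef_iff_dotProduct_mulVec).2 ⟨hH, fun x => ?_⟩
    have hx : star x = x := by simp
    rw [hx]
    have e1 : ∀ i j : Fin n, ω i j * (x i + x j) ^ 2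
        = ω i j * x i ^ 2 + 2 * (ω i j * x i * x j) + ω i j * x j ^ 2 := fun i j => by ring
    have h2q : ∑ i, ∑ j, ω i j * (x i + x j) ^ 2 = 2 * (x ⬝ᵥ (L₀p *ᵥ x)) := by
      have hq : x ⬝ᵥ (L₀p *ᵥ x)
          = (∑ i, d i * x i ^ 2) + ∑ i, ∑ j, ω i j * x i * x j := by
        rw [hL₀p]
        simp only [Matrix.add_mulVec, dotProduct_add]
        congr 1
        · simp only [dotProduct, Matrix.mulVec_diagonal]
          exact Finset.sum_congr rfl fun i _ => by ring
        · simp only [dotProduct, Matrix.mulVec, dotProduct, Finset.mul_sum]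
          exact Finset.sum_congr rfl fun i _ => Finset.sum_congr rfl fun j _ => by
            rw [hA]; ring
      calc ∑ i, ∑ j, ω i j * (x i + x j) ^ 2
          = ∑ i, ((∑ j, ω i j * x i ^ 2) + (∑ j, 2 * (ω i j * x i * x j))
              + ∑ j, ω i j * x j ^ 2) := by
            refine Finset.sum_congr rfl fun i _ => ?_
            simp_rw [e1, Finset.sum_add_distrib]
        _ = (∑ i, ∑ j, ω i j * x i ^ 2) + (∑ i, ∑ j, 2 * (ω i j * x i * x j))
              + ∑ i, ∑ j, ω i j * x j ^ 2 := by
            simp [Finset.sum_add_distrib]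
        _ = (∑ i, d i * x i ^ 2) + 2 * (∑ i, ∑ j, ω i j * x i * x j)
              + ∑ i, d i * x i ^ 2 := by
            congr 1
            · congr 1
              · refine Finset.sum_congr rfl fun i _ => ?_
                rw [← Finset.sum_mul, ← hd i]
              · rw [Finset.mul_sum]
                exact Finset.sum_congr rfl fun i _ => by rw [Finset.mul_sum]
            · rw [Finset.sum_comm]
              refine Finset.sum_congr rfl fun j _ => ?_
              rw [← Finset.sum_mul, hd j]
              congr 1
              exact Finset.sum_congr rfl fun i _ => hsymm i j
        _ = 2 * ((∑ i, d i * x i ^ 2) + ∑ i, ∑ j, ω i j * x i * x j) := by ring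
        _ = 2 * (x ⬝ᵥ (L₀p *ᵥ x)) := by rw [hq]
    have hpos : 0 ≤ ∑ i, ∑ j, ω i j * (x i + x j) ^ 2 :=
      Finset.sum_nonneg fun i _ => Finset.sum_nonneg fun j _ =>
        mul_nonneg (hnonneg i j) (sq_nonneg _)
    linarith [h2q ▸ hpos]
  -- eigenvalue bounds
  set ev : Fin n → ℝ := hH.eigenvalues with hev
  have hev_nonneg : ∀ k, 0 ≤ ev k := fun k => hPSD.eigenvalues_nonneg k
  have hev_le : ∀ k, ev k ≤ lam := by
    intro k
    refine hlam_max (ev k) (⇑(hH.eigenvectorBasis k)) ?_ (hH.mulVec_eigenvectorBasis k)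
    have hne : hH.eigenvectorBasis k ≠ 0 := hH.eigenvectorBasis.orthonormal.ne_zero k
    intro hzero
    apply hne
    ext j
    exact congrFun hzero j
  -- lam is positive
  have hlam_pos : 0 < lam := by
    by_contra hle
    push_neg at hle
    have : lam⁻¹ * Real.log (1 + s) ≤ 0 :=
      mul_nonpos_iff.2 (Or.inr ⟨inv_nonpos.2 hle, le_of_lt hlogpos⟩)
    linarith
  have hτlam : τ * lam < Real.log (1 + s) := by
    have := hτ
    rw [inv_mul_eq_div] at this
    exact (lt_div_iff₀ hlam_pos).1 this
  -- the contraction factor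
  set ε : ℝ := 1 - Real.exp (-(τ * lam)) with hε
  have hε_lt : ε < s := by
    have h1 : Real.exp (-(τ * lam)) > (1 + s)⁻¹ := by
      have : -(τ * lam) > Real.log ((1 + s)⁻¹) := by
        rw [Real.log_inv]
        linarith
      calc (1 + s)⁻¹ = Real.exp (Real.log ((1 + s)⁻¹)) := by
            rw [Real.exp_log (by positivity)]
        _ < Real.exp (-(τ * lam)) := Real.exp_lt_exp.2 this
    have h2 : 1 - (1 + s)⁻¹ < s := by
      have h4 : 1 - s < (1 + s)⁻¹ := by
        rw [← one_div, lt_div_iff₀ (by positivity : (0:ℝ) < 1 + s)]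
        nlinarith [hspos]
      linarith
    linarith
  have hε_nonneg : 0 ≤ ε := by
    have : Real.exp (-(τ * lam)) ≤ 1 := by
      rw [Real.exp_le_one_iff]
      nlinarith
    linarith
  -- spectral decomposition
  set U : Matrix (Fin n) (Fin n) ℝ := (hH.eigenvectorUnitary : Matrix (Fin n) (Fin n) ℝ)
    with hUdef
  have hU1 : U * star U = 1 := (Matrix.mem_unitaryGroup_iff).mp hH.eigenvectorUnitary.2
  have hU2 : star U * U = 1 := (Matrix.mem_unitaryGroup_iff').mp hH.eigenvectorUnitary.2
  have hspec : L₀p = U * Matrix.diagonal ev * star U := by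
    have := hH.spectral_theorem
    simpa using this
  have hUinv : U⁻¹ = star U := Matrix.inv_eq_left_inv hU2
  have hUunit : IsUnit U := ⟨Unitary.toUnits hH.eigenvectorUnitary, rfl⟩
  -- matrix exponential
  have hexp : NormedSpace.exp (-(τ • L₀p))
      = U * Matrix.diagonal (fun k => Real.exp (-(τ * ev k))) * star U := by
    have h1 : -(τ • L₀p) = U * Matrix.diagonal (fun k => -(τ * ev k)) * U⁻¹ := by
      rw [hUinv, hspec]
      have : Matrix.diagonal (fun k => -(τ * ev k)) = -(τ • Matrix.diagonal ev) := by
        rw [← Matrix.diagonal_smul, ← Matrix.diagonal_neg]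
        congr 1
      rw [this]
      simp [Matrix.mul_smul, Matrix.smul_mul, Matrix.neg_mul, Matrix.mul_neg]
    rw [h1, Matrix.exp_conj U _ hUunit, Matrix.exp_diagonal, hUinv]
    congr 2
    funext k
    rw [Pi.exp_def, ← Real.exp_eq_exp_ℝ]
  -- coordinates
  set c : Fin n → ℝ := star U *ᵥ μ₀ with hc
  have hμ₀U : U *ᵥ c = μ₀ := by
    rw [hc, Matrix.mulVec_mulVec, hU1, Matrix.one_mulVec]
  have hrow : ∀ i, ∑ k, (U i k) ^ 2 = 1 := by
    intro i
    have := congrFun (congrFun hU1 i) i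
    simp only [Matrix.mul_apply, Matrix.one_apply_eq] at this
    rw [← this]
    refine Finset.sum_congr rfl fun k _ => ?_
    simp [Matrix.conjTranspose_apply, sq]
  have hcnorm : ∑ k, (c k) ^ 2 = (n : ℝ) := by
    have h1 : ∑ k, (c k) ^ 2 = c ⬝ᵥ c := by
      simp [dotProduct, sq]
    have h2 : c ⬝ᵥ c = μ₀ ⬝ᵥ μ₀ := by
      calc c ⬝ᵥ c = c ⬝ᵥ (star U *ᵥ μ₀) := by rw [← hc]
        _ = (c ᵥ* star U) ⬝ᵥ μ₀ := by rw [Matrix.dotProduct_mulVec]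
        _ = ((star U)ᵀ *ᵥ c) ⬝ᵥ μ₀ := by rw [Matrix.mulVec_transpose]
        _ = (U *ᵥ c) ⬝ᵥ μ₀ := by
            have hTT : (star U)ᵀ = U := by
              ext i j
              simp [Matrix.conjTranspose_apply]
            rw [hTT]
        _ = μ₀ ⬝ᵥ μ₀ := by rw [hμ₀U]
    have h3 : μ₀ ⬝ᵥ μ₀ = (n : ℝ) := by
      have : ∀ i, μ₀ i * μ₀ i = 1 := by
        intro i
        rcases hμ₀ i with h | h <;> rw [h] <;> norm_num
      simp [dotProduct, this]
    rw [h1, h2, h3]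
  -- entrywise deviation bound
  have hdev : ∀ i, |(NormedSpace.exp (-(τ • L₀p)) *ᵥ μ₀) i - μ₀ i| < 1 := by
    intro i
    have hform : (NormedSpace.exp (-(τ • L₀p)) *ᵥ μ₀) i - μ₀ i
        = ∑ k, U i k * ((Real.exp (-(τ * ev k)) - 1) * c k) := by
      have h1 : NormedSpace.exp (-(τ • L₀p)) *ᵥ μ₀
          = U *ᵥ (Matrix.diagonal (fun k => Real.exp (-(τ * ev k))) *ᵥ c) := by
        rw [hexp, hc, Matrix.mulVec_mulVec, Matrix.mulVec_mulVec, ← Matrix.mulVec_mulVec,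
          ← Matrix.mulVec_mulVec]
      have hdg : Matrix.diagonal (fun k => Real.exp (-(τ * ev k))) *ᵥ c
          = fun k => Real.exp (-(τ * ev k)) * c k := by
        ext k
        rw [Matrix.mulVec_diagonal]
      rw [h1, hdg, ← hμ₀U]
      simp only [Matrix.mulVec, dotProduct, ← Finset.sum_sub_distrib]
      exact Finset.sum_congr rfl fun k _ => by ring
    rw [hform]
    have hCS : (∑ k, U i k * ((Real.exp (-(τ * ev k)) - 1) * c k)) ^ 2
        ≤ (∑ k, (U i k) ^ 2) * ∑ k, ((Real.exp (-(τ * ev k)) - 1) * c k) ^ 2 :=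
      Finset.sum_mul_sq_le_sq_mul_sq _ _ _
    have hterm : ∀ k, ((Real.exp (-(τ * ev k)) - 1) * c k) ^ 2 ≤ ε ^ 2 * (c k) ^ 2 := by
      intro k
      have hub : Real.exp (-(τ * ev k)) ≤ 1 := by
        rw [Real.exp_le_one_iff]
        have := hev_nonneg k
        nlinarith
      have hlb : Real.exp (-(τ * lam)) ≤ Real.exp (-(τ * ev k)) := by
        apply Real.exp_le_exp.2
        have := hev_le k
        nlinarith
      have habs : |Real.exp (-(τ * ev k)) - 1| ≤ ε := by
        rw [abs_le]
        constructor <;> [linarith; linarith]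
      calc ((Real.exp (-(τ * ev k)) - 1) * c k) ^ 2
          = (Real.exp (-(τ * ev k)) - 1) ^ 2 * (c k) ^ 2 := by ring
        _ ≤ ε ^ 2 * (c k) ^ 2 := by
            apply mul_le_mul_of_nonneg_right _ (sq_nonneg _)
            calc (Real.exp (-(τ * ev k)) - 1) ^ 2 = |Real.exp (-(τ * ev k)) - 1| ^ 2 := by
                  rw [sq_abs]
              _ ≤ ε ^ 2 := by
                  apply pow_le_pow_left₀ (abs_nonneg _) habs
        _ = ε ^ 2 * (c k) ^ 2 := rfl
    have hsum : ∑ k, ((Real.exp (-(τ * ev k)) - 1) * c k) ^ 2 ≤ ε ^ 2 * (n : ℝ) := by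
      calc ∑ k, ((Real.exp (-(τ * ev k)) - 1) * c k) ^ 2
          ≤ ∑ k, ε ^ 2 * (c k) ^ 2 := Finset.sum_le_sum fun k _ => hterm k
        _ = ε ^ 2 * ∑ k, (c k) ^ 2 := by rw [Finset.mul_sum]
        _ = ε ^ 2 * (n : ℝ) := by rw [hcnorm]
    have hsn : s ^ 2 * (n : ℝ) = 1 := by
      have : s ^ 2 = (n : ℝ) ^ (-(1 : ℝ)) := by
        rw [hs, ← Real.rpow_natCast (((n:ℝ)) ^ (-(1:ℝ)/2)) 2, ← Real.rpow_mul (le_of_lt hnpos)]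
        norm_num
      rw [this, Real.rpow_neg_one]
      field_simp
    have hfin : (∑ k, U i k * ((Real.exp (-(τ * ev k)) - 1) * c k)) ^ 2 < 1 := by
      calc (∑ k, U i k * ((Real.exp (-(τ * ev k)) - 1) * c k)) ^ 2
          ≤ (∑ k, (U i k) ^ 2) * ∑ k, ((Real.exp (-(τ * ev k)) - 1) * c k) ^ 2 := hCS
        _ = ∑ k, ((Real.exp (-(τ * ev k)) - 1) * c k) ^ 2 := by rw [hrow i, one_mul]
        _ ≤ ε ^ 2 * (n : ℝ) := hsum
        _ < s ^ 2 * (n : ℝ) := by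
            apply mul_lt_mul_of_pos_right _ hnpos
            exact pow_lt_pow_left₀ hε_lt hε_nonneg (by norm_num)
        _ = 1 := hsn
    exact (sq_lt_one_iff_abs_lt_one _).1 hfin
  -- conclusion
  intro i
  rcases hμ₀ i with h | h
  · have hlt := hdev i
    rw [h] at hlt ⊢
    have : (NormedSpace.exp (-(τ • L₀p)) *ᵥ μ₀) i < 0 := by
      rcases abs_lt.1 hlt with ⟨_, h2⟩
      linarith
    rw [if_neg (by linarith)]
  · have hlt := hdev i
    rw [h] at hlt ⊢
    have : 0 < (NormedSpace.exp (-(τ • L₀p)) *ᵥ μ₀) i := by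
      rcases abs_lt.1 hlt with ⟨h1, _⟩
      linarith
    rw [if_pos this]
end
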